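/- Let H be a Hopf algebra, with B_H the generic base algebra for the trivial cocycle and B_H⁺ = B_H ∩ Ker ε its augmentation ideal. Then the Hopf algebra morphism S(t_H)_Θ → H_ab induced by t_x ↦ x̄ (the image of x in the abelianization H_ab) is surjective with kernel the ideal (B_H⁺) generated by B_H⁺; hence S(t_H)_Θ/(B_H⁺) ≅ H_ab as commutative Hopf algebras. -/

import Mathlib

open TensorProduct

noncomputable section

variable (k : Type) [Field k]

/-- Convolution product of two linear maps from a coalgebra to an algebra. -/
def conv {C A : Type} [AddCommGroup C] [Module k C] [Coalgebra k C]
    [Ring A] [Algebra k A] (f g : C →ₗ[k] A) : C →ₗ[k] A :=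
  LinearMap.mul' k A ∘ₗ TensorProduct.map f g ∘ₗ Coalgebra.comul

/-- Unit of the convolution algebra: `unit ∘ counit`. -/
def convOne {C A : Type} [AddCommGroup C] [Module k C] [Coalgebra k C]
    [Ring A] [Algebra k A] : C →ₗ[k] A :=
  Algebra.linearMap k A ∘ₗ Coalgebra.counit

section CocycleDefs

variable {H : Type} [Ring H] [HopfAlgebra k H]

/-- The two-cocycle condition `β(x₁,y₁) β(x₂y₂,z) = β(y₁,z₁) β(x,y₂z₂)` for an `A`-valued
bilinear form `β` on `H`, as an equality of linear maps on `(H ⊗ H) ⊗ H`. -/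
def IsCocycle {A : Type} [CommRing A] [Algebra k A] (β : H ⊗[k] H →ₗ[k] A) : Prop :=
  conv k (LinearMap.mul' k A ∘ₗ TensorProduct.map β (convOne k))
      (β ∘ₗ TensorProduct.map (LinearMap.mul' k H) LinearMap.id)
  = conv k
      (LinearMap.mul' k A ∘ₗ TensorProduct.map (convOne k) β
        ∘ₗ (TensorProduct.assoc k H H H).toLinearMap)
      (β ∘ₗ TensorProduct.map LinearMap.id (LinearMap.mul' k H)
        ∘ₗ (TensorProduct.assoc k H H H).toLinearMap)

/-- `β` and `βinv` are mutually inverse for the convolution product. -/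
def IsConvInverse {A : Type} [CommRing A] [Algebra k A]
    (β βinv : H ⊗[k] H →ₗ[k] A) : Prop :=
  conv k β βinv = convOne k ∧ conv k βinv β = convOne k

end CocycleDefs

variable (C : Type) [AddCommGroup C] [Module k C] [Coalgebra k C]

/-- A model of Takeuchi's free commutative Hopf algebra `S(t_C)_Θ` generated by the
coalgebra `C`, together with its generators `t_x` and `t⁻¹_x`. -/
structure TakData (T : Type) [CommRing T] [HopfAlgebra k T] where
  t : C →ₗ[k] T
  tinv : C →ₗ[k] T
  comul_t : Coalgebra.comul ∘ₗ t = TensorProduct.map t t ∘ₗ Coalgebra.comul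
  counit_t : Coalgebra.counit ∘ₗ t = Coalgebra.counit
  comul_tinv : Coalgebra.comul ∘ₗ tinv
    = TensorProduct.map tinv tinv ∘ₗ (TensorProduct.comm k C C).toLinearMap ∘ₗ Coalgebra.comul
  counit_tinv : Coalgebra.counit ∘ₗ tinv = Coalgebra.counit
  conv_t_tinv : conv k t tinv = convOne k
  conv_tinv_t : conv k tinv t = convOne k
  antipode_t : HopfAlgebra.antipode (R := k) ∘ₗ t = tinv
  antipode_tinv : HopfAlgebra.antipode (R := k) ∘ₗ tinv = t
  adjoin_eq_top : Algebra.adjoin k (Set.range ⇑t ∪ Set.range ⇑tinv) = ⊤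

namespace TakData

variable {k C} {H : Type} [Ring H] [HopfAlgebra k H]
variable {T : Type} [CommRing T] [HopfAlgebra k T] (D : TakData k H T)

/-- `x ⊗ y ↦ t_x t_y`. -/
def tt : H ⊗[k] H →ₗ[k] T := LinearMap.mul' k T ∘ₗ TensorProduct.map D.t D.t

/-- `x ⊗ y ↦ t⁻¹_{xy}`. -/
def tinvMul : H ⊗[k] H →ₗ[k] T := D.tinv ∘ₗ LinearMap.mul' k H

/-- `x ⊗ y ↦ t_{xy}`. -/
def tMul : H ⊗[k] H →ₗ[k] T := D.t ∘ₗ LinearMap.mul' k H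

/-- `x ⊗ y ↦ t⁻¹_x t⁻¹_y`. -/
def tinvtinv : H ⊗[k] H →ₗ[k] T := LinearMap.mul' k T ∘ₗ TensorProduct.map D.tinv D.tinv

/-- The generic cocycle for the trivial cocycle: `σ(x,y) = t_{x₁} t_{y₁} t⁻¹_{x₂y₂}`. -/
def sigmaEps : H ⊗[k] H →ₗ[k] T := conv k D.tt D.tinvMul

/-- Its convolution inverse: `σ⁻¹(x,y) = t_{x₁y₁} t⁻¹_{x₂} t⁻¹_{y₂}`. -/
def sigmaEpsInv : H ⊗[k] H →ₗ[k] T := conv k D.tMul D.tinvtinv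

/-- The generic cocycle attached to `α`: `σ_α(x,y) = t_{x₁} t_{y₁} α(x₂,y₂) t⁻¹_{x₃y₃}`. -/
def sigma (α : H ⊗[k] H →ₗ[k] k) : H ⊗[k] H →ₗ[k] T :=
  conv k (conv k D.tt (Algebra.linearMap k T ∘ₗ α)) D.tinvMul

/-- The inverse generic cocycle: `σ_α⁻¹(x,y) = t_{x₁y₁} α⁻¹(x₂,y₂) t⁻¹_{x₃} t⁻¹_{y₃}`. -/
def sigmaInv (αinv : H ⊗[k] H →ₗ[k] k) : H ⊗[k] H →ₗ[k] T :=
  conv k (conv k D.tMul (Algebra.linearMap k T ∘ₗ αinv)) D.tinvtinv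

/-- The generic base algebra `B_H^α`: the subalgebra of `S(t_H)_Θ` generated by the values
of the generic cocycle `σ_α` and of its inverse. -/
def genBase (α αinv : H ⊗[k] H →ₗ[k] k) : Subalgebra k T :=
  Algebra.adjoin k
    (Set.range (fun p : H × H => D.sigma α (p.1 ⊗ₜ[k] p.2)) ∪
      Set.range (fun p : H × H => D.sigmaInv αinv (p.1 ⊗ₜ[k] p.2)))

/-- The generic base algebra `B_H` for the trivial cocycle. -/
def B : Subalgebra k T :=
  Algebra.adjoin k
    (Set.range (fun p : H × H => D.sigmaEps (p.1 ⊗ₜ[k] p.2)) ∪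
      Set.range (fun p : H × H => D.sigmaEpsInv (p.1 ⊗ₜ[k] p.2)))

end TakData

section ConvTools
open Coalgebra
variable {k}
variable {C : Type} [AddCommGroup C] [Module k C] [Coalgebra k C]
variable {A : Type} [Ring A] [Algebra k A]

lemma conv_apply_repr {ι : Type*} (f g : C →ₗ[k] A) (a : C) (r : Coalgebra.Repr k a ι) :
    conv k f g a = ∑ i ∈ r.index, f (r.left i) * g (r.right i) := by
  simp [conv, ← r.eq, map_sum]

lemma convOne_apply (a : C) : (convOne k : C →ₗ[k] A) a = algebraMap k A (counit a) := rfl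

lemma conv_convOne (f : C →ₗ[k] A) : conv k f (convOne k) = f := by
  ext a
  let r := ℛ k a
  have h2 : ∑ i ∈ r.index, counit (R := k) (r.right i) • r.left i = a := by
    have := congrArg (TensorProduct.rid k C) (Coalgebra.sum_tmul_counit_eq (R := k) r)
    simpa only [map_sum, LinearEquiv.coe_coe, TensorProduct.rid_tmul, one_smul] using this
  rw [conv_apply_repr f _ a r]
  calc ∑ i ∈ r.index, f (r.left i) * convOne k (r.right i)
      = ∑ i ∈ r.index, f (counit (R := k) (r.right i) • r.left i) := by
        refine Finset.sum_congr rfl fun i _ => ?_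
        rw [convOne_apply, ← Algebra.commutes, ← Algebra.smul_def, map_smul]
    _ = f a := by rw [← map_sum, h2]

lemma convOne_conv (f : C →ₗ[k] A) : conv k (convOne k) f = f := by
  ext a
  let r := ℛ k a
  have h2 : ∑ i ∈ r.index, counit (R := k) (r.left i) • r.right i = a := by
    have := congrArg (TensorProduct.lid k C) (Coalgebra.sum_counit_tmul_eq (R := k) r)
    simpa only [map_sum, LinearEquiv.coe_coe, TensorProduct.lid_tmul, one_smul] using this
  rw [conv_apply_repr _ f a r]
  calc ∑ i ∈ r.index, convOne k (r.left i) * f (r.right i)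
      = ∑ i ∈ r.index, f (counit (R := k) (r.left i) • r.right i) := by
        refine Finset.sum_congr rfl fun i _ => ?_
        rw [convOne_apply, ← Algebra.smul_def, map_smul]
    _ = f a := by rw [← map_sum, h2]

lemma conv_assoc (f g h : C →ₗ[k] A) :
    conv k (conv k f g) h = conv k f (conv k g h) := by
  ext a
  let r := ℛ k a
  let r₁ : ∀ i : C × C, Coalgebra.Repr k (r.left i) (C × C) := fun i => ℛ k (r.left i)
  let r₂ : ∀ i : C × C, Coalgebra.Repr k (r.right i) (C × C) := fun i => ℛ k (r.right i)
  have key := Coalgebra.sum_tmul_tmul_eq r r₁ r₂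
  have key2 := congrArg (LinearMap.mul' k A ∘ₗ TensorProduct.map f (LinearMap.mul' k A ∘ₗ TensorProduct.map g h)) key
  simp only [map_sum, LinearMap.comp_apply, TensorProduct.map_tmul, LinearMap.mul'_apply] at key2
  rw [conv_apply_repr (conv k f g) h a r, conv_apply_repr f (conv k g h) a r]
  calc ∑ i ∈ r.index, conv k f g (r.left i) * h (r.right i)
      = ∑ i ∈ r.index, ∑ j ∈ (r₁ i).index,
          f ((r₁ i).left j) * (g ((r₁ i).right j) * h (r.right i)) := by
        refine Finset.sum_congr rfl fun i _ => ?_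
        rw [conv_apply_repr f g _ (r₁ i), Finset.sum_mul]
        exact Finset.sum_congr rfl fun j _ => mul_assoc _ _ _
    _ = ∑ i ∈ r.index, ∑ j ∈ (r₂ i).index,
          f (r.left i) * (g ((r₂ i).left j) * h ((r₂ i).right j)) := key2
    _ = ∑ i ∈ r.index, f (r.left i) * conv k g h (r.right i) := by
        refine Finset.sum_congr rfl fun i _ => ?_
        rw [conv_apply_repr g h _ (r₂ i), Finset.mul_sum]

lemma conv_inv_unique {f g g' : C →ₗ[k] A} (h1 : conv k f g = convOne k)
    (h2 : conv k g' f = convOne k) : g' = g := by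
  have := conv_assoc g' f g
  rw [h1, h2, conv_convOne, convOne_conv] at this
  exact this.symm

end ConvTools

section ConvTools2
open Coalgebra
variable {k : Type} [Field k]
variable {C : Type} [AddCommGroup C] [Module k C] [Coalgebra k C]
variable {A : Type} [Ring A] [Algebra k A]
variable {B : Type} [Ring B] [Algebra k B]

lemma algHom_comp_conv (φ : A →ₐ[k] B) (f g : C →ₗ[k] A) :
    φ.toLinearMap ∘ₗ conv k f g = conv k (φ.toLinearMap ∘ₗ f) (φ.toLinearMap ∘ₗ g) := by
  ext a
  let r := ℛ k a
  simp only [LinearMap.comp_apply, conv_apply_repr f g a r,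
    conv_apply_repr (φ.toLinearMap ∘ₗ f) (φ.toLinearMap ∘ₗ g) a r, map_sum, map_mul,
    AlgHom.toLinearMap_apply]

lemma algHom_comp_convOne (φ : A →ₐ[k] B) :
    φ.toLinearMap ∘ₗ (convOne k : C →ₗ[k] A) = convOne k := by
  ext a
  simp [convOne, AlgHom.commutes]

lemma conv_comp_coalgMap {C' : Type} [AddCommGroup C'] [Module k C'] [Coalgebra k C']
    (ψ : C' →ₗ[k] C) (hψ : Coalgebra.comul ∘ₗ ψ = TensorProduct.map ψ ψ ∘ₗ Coalgebra.comul)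
    (f g : C →ₗ[k] A) : conv k f g ∘ₗ ψ = conv k (f ∘ₗ ψ) (g ∘ₗ ψ) := by
  unfold conv
  rw [LinearMap.comp_assoc, LinearMap.comp_assoc, hψ, ← LinearMap.comp_assoc _ _ (TensorProduct.map f g),
    ← TensorProduct.map_comp]

lemma convOne_comp_counitMap {C' : Type} [AddCommGroup C'] [Module k C'] [Coalgebra k C']
    (ψ : C' →ₗ[k] C) (hψ : Coalgebra.counit ∘ₗ ψ = (Coalgebra.counit : C' →ₗ[k] k)) :
    (convOne k : C →ₗ[k] A) ∘ₗ ψ = convOne k := by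
  unfold convOne
  rw [LinearMap.comp_assoc, hψ]

variable {H : Type} [Ring H] [Bialgebra k H]

lemma algHom_comp_mul' {A' : Type} [Ring A'] [Algebra k A'] (φ : A' →ₐ[k] A) :
    φ.toLinearMap ∘ₗ LinearMap.mul' k A'
      = LinearMap.mul' k A ∘ₗ TensorProduct.map φ.toLinearMap φ.toLinearMap := by
  apply TensorProduct.ext'
  intro x y
  simp

lemma map_mul'_ttt (u v : H ⊗[k] H) :
    TensorProduct.map (LinearMap.mul' k H) (LinearMap.mul' k H)
      (TensorProduct.tensorTensorTensorComm k H H H H (u ⊗ₜ[k] v)) = u * v := by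
  induction u using TensorProduct.induction_on with
  | zero => simp
  | tmul a b =>
    induction v using TensorProduct.induction_on with
    | zero => simp
    | tmul c d => simp [Algebra.TensorProduct.tmul_mul_tmul]
    | add u v hu hv => simp only [TensorProduct.tmul_add, map_add, hu, hv, mul_add]
  | add u v hu hv => simp only [TensorProduct.add_tmul, map_add, hu, hv, add_mul]

lemma comul_comp_mul' :
    Coalgebra.comul ∘ₗ LinearMap.mul' k H
      = TensorProduct.map (LinearMap.mul' k H) (LinearMap.mul' k H)
        ∘ₗ (Coalgebra.comul : H ⊗[k] H →ₗ[k] (H ⊗[k] H) ⊗[k] (H ⊗[k] H)) := by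
  apply TensorProduct.ext'
  intro x y
  have : (Coalgebra.comul : H ⊗[k] H →ₗ[k] _) (x ⊗ₜ[k] y)
      = TensorProduct.tensorTensorTensorComm k H H H H
          ((Coalgebra.comul x) ⊗ₜ[k] (Coalgebra.comul y)) := rfl
  rw [LinearMap.comp_apply, LinearMap.comp_apply, this, map_mul'_ttt, LinearMap.mul'_apply,
    Bialgebra.comul_mul]

lemma counit_comp_mul' :
    Coalgebra.counit ∘ₗ LinearMap.mul' k H = (Coalgebra.counit : H ⊗[k] H →ₗ[k] k) := by
  apply TensorProduct.ext'
  intro x y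
  have : (Coalgebra.counit : H ⊗[k] H →ₗ[k] k) (x ⊗ₜ[k] y)
      = Coalgebra.counit x * Coalgebra.counit y := by
    rw [TensorProduct.counit_tmul, smul_eq_mul, mul_comm]
  simp [this, Bialgebra.counit_mul]

end ConvTools2

section ConvTools3
open Coalgebra
variable {k : Type} [Field k]
variable {C : Type} [AddCommGroup C] [Module k C] [Coalgebra k C]
variable {C' : Type} [AddCommGroup C'] [Module k C'] [Coalgebra k C']
variable {A : Type} [CommRing A] [Algebra k A]

lemma comul_tmul_repr {ι ι' : Type*} (c : C) (c' : C') (r : Coalgebra.Repr k c ι) (r' : Coalgebra.Repr k c' ι') :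
    (Coalgebra.comul : C ⊗[k] C' →ₗ[k] _) (c ⊗ₜ[k] c')
      = ∑ i ∈ r.index, ∑ j ∈ r'.index,
          (r.left i ⊗ₜ[k] r'.left j) ⊗ₜ[k] (r.right i ⊗ₜ[k] r'.right j) := by
  have : (Coalgebra.comul : C ⊗[k] C' →ₗ[k] _) (c ⊗ₜ[k] c')
      = TensorProduct.tensorTensorTensorComm k C C C' C'
          ((Coalgebra.comul c) ⊗ₜ[k] (Coalgebra.comul c')) := rfl
  rw [this, ← r.eq, ← r'.eq, TensorProduct.sum_tmul]
  simp only [TensorProduct.tmul_sum, map_sum, TensorProduct.tensorTensorTensorComm_tmul]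

lemma counit_tmul (c : C) (c' : C') :
    (Coalgebra.counit : C ⊗[k] C' →ₗ[k] k) (c ⊗ₜ[k] c')
      = Coalgebra.counit c * Coalgebra.counit c' := by
  rw [TensorProduct.counit_tmul, smul_eq_mul, mul_comm]

lemma mul'_map_convOne_convOne :
    LinearMap.mul' k A ∘ₗ TensorProduct.map (convOne k : C →ₗ[k] A) (convOne k : C' →ₗ[k] A)
      = convOne k := by
  apply TensorProduct.ext'
  intro c c'
  simp [convOne_apply, _root_.counit_tmul, map_mul, mul_comm]

lemma conv_mul'_map (f f' : C →ₗ[k] A) (g g' : C' →ₗ[k] A) :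
    conv k (LinearMap.mul' k A ∘ₗ TensorProduct.map f g)
        (LinearMap.mul' k A ∘ₗ TensorProduct.map f' g')
      = LinearMap.mul' k A ∘ₗ TensorProduct.map (conv k f f') (conv k g g') := by
  apply TensorProduct.ext'
  intro c c'
  let r := ℛ k c
  let r' := ℛ k c'
  have hc := comul_tmul_repr c c' r r'
  rw [conv, LinearMap.comp_apply, LinearMap.comp_apply, hc]
  simp only [map_sum, TensorProduct.map_tmul, LinearMap.mul'_apply, LinearMap.comp_apply]
  rw [conv_apply_repr f f' c r, conv_apply_repr g g' c' r', Finset.sum_mul_sum]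
  refine Finset.sum_congr rfl fun i _ => Finset.sum_congr rfl fun j _ => ?_
  ring

end ConvTools3

section ConvTools4
open Coalgebra
variable {k : Type} [Field k]
variable {C : Type} [AddCommGroup C] [Module k C] [Coalgebra k C]
variable {A : Type} [Ring A] [Algebra k A]

lemma convOne_k : (convOne k : C →ₗ[k] k) = Coalgebra.counit := by
  ext a; simp [convOne]

lemma algHom_comp_mul'_map {A' : Type} [Ring A'] [Algebra k A'] (φ : A' →ₐ[k] A)
    {M N : Type} [AddCommGroup M] [Module k M] [AddCommGroup N] [Module k N]
    (s : M →ₗ[k] A') (s' : N →ₗ[k] A') :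
    φ.toLinearMap ∘ₗ (LinearMap.mul' k A' ∘ₗ TensorProduct.map s s')
      = LinearMap.mul' k A ∘ₗ TensorProduct.map (φ.toLinearMap ∘ₗ s) (φ.toLinearMap ∘ₗ s') := by
  rw [← LinearMap.comp_assoc, algHom_comp_mul' φ, LinearMap.comp_assoc, ← TensorProduct.map_comp]

end ConvTools4

namespace TakData
open Coalgebra
variable {k : Type} [Field k] {H : Type} [Ring H] [HopfAlgebra k H]
variable {T : Type} [CommRing T] [HopfAlgebra k T] (D : TakData k H T)

lemma conv_comp_aux {A : Type} [CommRing A] [Algebra k A] (φ : T →ₐ[k] A) :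
    conv k (φ.toLinearMap ∘ₗ D.t) (φ.toLinearMap ∘ₗ D.tinv) = convOne k
      ∧ conv k (φ.toLinearMap ∘ₗ D.tinv) (φ.toLinearMap ∘ₗ D.t) = convOne k := by
  constructor
  · rw [← algHom_comp_conv, D.conv_t_tinv, algHom_comp_convOne]
  · rw [← algHom_comp_conv, D.conv_tinv_t, algHom_comp_convOne]

/-- Lemma B: if `φ ∘ t` is "multiplicative" then `φ` kills the generic cocycle. -/
lemma algHom_comp_sigma {A : Type} [CommRing A] [Algebra k A] (φ : T →ₐ[k] A)
    (hmul : LinearMap.mul' k A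
        ∘ₗ TensorProduct.map (φ.toLinearMap ∘ₗ D.t) (φ.toLinearMap ∘ₗ D.t)
      = (φ.toLinearMap ∘ₗ D.t) ∘ₗ LinearMap.mul' k H) :
    φ.toLinearMap ∘ₗ D.sigmaEps = convOne k
      ∧ φ.toLinearMap ∘ₗ D.sigmaEpsInv = convOne k := by
  obtain ⟨huv, hvu⟩ := D.conv_comp_aux φ
  have htt : φ.toLinearMap ∘ₗ D.tt
      = LinearMap.mul' k A
          ∘ₗ TensorProduct.map (φ.toLinearMap ∘ₗ D.t) (φ.toLinearMap ∘ₗ D.t) := by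
    rw [tt, algHom_comp_mul'_map]
  have htinvMul : φ.toLinearMap ∘ₗ D.tinvMul = (φ.toLinearMap ∘ₗ D.tinv) ∘ₗ LinearMap.mul' k H := by
    rw [tinvMul, ← LinearMap.comp_assoc]
  have htMul : φ.toLinearMap ∘ₗ D.tMul = (φ.toLinearMap ∘ₗ D.t) ∘ₗ LinearMap.mul' k H := by
    rw [tMul, ← LinearMap.comp_assoc]
  have htinvtinv : φ.toLinearMap ∘ₗ D.tinvtinv
      = LinearMap.mul' k A
          ∘ₗ TensorProduct.map (φ.toLinearMap ∘ₗ D.tinv) (φ.toLinearMap ∘ₗ D.tinv) := by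
    rw [tinvtinv, algHom_comp_mul'_map]
  constructor
  · rw [sigmaEps, algHom_comp_conv, htt, hmul, htinvMul, ← conv_comp_coalgMap _ comul_comp_mul',
      huv, convOne_comp_counitMap _ counit_comp_mul']
  · rw [sigmaEpsInv, algHom_comp_conv, htMul, ← hmul, htinvtinv, conv_mul'_map, huv,
      mul'_map_convOne_convOne]

/-- Lemma C : `σ * t_{xy} = t_x t_y` in the convolution monoid. -/
lemma conv_sigmaEps_tMul : conv k D.sigmaEps D.tMul = D.tt := by
  rw [sigmaEps, conv_assoc, tinvMul, tMul, ← conv_comp_coalgMap _ comul_comp_mul',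
    D.conv_tinv_t, convOne_comp_counitMap _ counit_comp_mul', conv_convOne]

end TakData

/-- Let `π : H → H_ab` be the abelianization of `H` (a surjective bialgebra
morphism onto a commutative Hopf algebra, universal among algebra maps to commutative
algebras). Then any Hopf algebra morphism `F : S(t_H)_Θ → H_ab` with `F(t_x) = π(x)` is
surjective with kernel the ideal `(B_H⁺)` generated by the augmentation ideal of `B_H`;
hence `S(t_H)_Θ/(B_H⁺) ≅ H_ab`. -/
theorem quotient_by_augmentation_ideal
    {H : Type} [Ring H] [HopfAlgebra k H]
    {T : Type} [CommRing T] [HopfAlgebra k T] (D : TakData k H T)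
    (Hab : Type) [CommRing Hab] [HopfAlgebra k Hab]
    (π : H →ₐ[k] Hab)
    (hπcomul : Coalgebra.comul ∘ₗ π.toLinearMap
      = TensorProduct.map π.toLinearMap π.toLinearMap ∘ₗ Coalgebra.comul)
    (hπcounit : Coalgebra.counit ∘ₗ π.toLinearMap = (Coalgebra.counit : H →ₗ[k] k))
    (hπsurj : Function.Surjective π)
    (hab_univ : ∀ (A : Type) [CommRing A] [Algebra k A] (g : H →ₐ[k] A),
      ∃! gbar : Hab →ₐ[k] A, gbar.comp π = g)
    (F : T →ₐ[k] Hab)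
    (hFcomul : Coalgebra.comul ∘ₗ F.toLinearMap
      = TensorProduct.map F.toLinearMap F.toLinearMap ∘ₗ Coalgebra.comul)
    (hFcounit : Coalgebra.counit ∘ₗ F.toLinearMap = (Coalgebra.counit : T →ₗ[k] k))
    (hFt : F.toLinearMap ∘ₗ D.t = π.toLinearMap) :
    Function.Surjective F ∧
    RingHom.ker F.toRingHom
      = Ideal.span {x : T | x ∈ D.B ∧ Coalgebra.counit (R := k) x = 0} ∧
    Nonempty
      ((T ⧸ Ideal.span {x : T | x ∈ D.B ∧ Coalgebra.counit (R := k) x = 0}) ≃ₐ[k] Hab) := by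
  classical
  set I : Ideal T := Ideal.span {x : T | x ∈ D.B ∧ Coalgebra.counit (R := k) x = 0} with hIdef
  set p : T →ₐ[k] T ⧸ I := Ideal.Quotient.mkₐ k I with hpdef
  -- the counit kills sigma
  have hεT : (Bialgebra.counitAlgHom k T).toLinearMap = (Coalgebra.counit : T →ₗ[k] k) := rfl
  have hεσ0 := D.algHom_comp_sigma (Bialgebra.counitAlgHom k T) (by
    rw [hεT, D.counit_t, counit_comp_mul']; exact TensorProduct.ext' fun x y => by
      rw [LinearMap.comp_apply, TensorProduct.map_tmul, LinearMap.mul'_apply, _root_.counit_tmul])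
  have hεσ : Coalgebra.counit ∘ₗ D.sigmaEps = (Coalgebra.counit : H ⊗[k] H →ₗ[k] k) := by
    rw [← hεT, hεσ0.1, convOne_k]
  have hεσ' : Coalgebra.counit ∘ₗ D.sigmaEpsInv = (Coalgebra.counit : H ⊗[k] H →ₗ[k] k) := by
    rw [← hεT, hεσ0.2, convOne_k]
  -- F kills sigma
  have hFσ0 := D.algHom_comp_sigma F (by rw [hFt, algHom_comp_mul' π])
  -- membership of sigma values in B
  have hσB : ∀ x y : H, D.sigmaEps (x ⊗ₜ[k] y) ∈ D.B := fun x y =>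
    Algebra.subset_adjoin (Or.inl ⟨(x, y), rfl⟩)
  have hσ'B : ∀ x y : H, D.sigmaEpsInv (x ⊗ₜ[k] y) ∈ D.B := fun x y =>
    Algebra.subset_adjoin (Or.inr ⟨(x, y), rfl⟩)
  -- elements of B are congruent to scalars mod I
  have hpB : ∀ x : T, x ∈ D.B → p x = algebraMap k (T ⧸ I) (Coalgebra.counit (R := k) x) := by
    intro x hx
    have hd : x - algebraMap k T (Coalgebra.counit (R := k) x) ∈ I := by
      rw [hIdef]
      apply Ideal.subset_span
      refine ⟨Subalgebra.sub_mem _ hx (Subalgebra.algebraMap_mem _ _), ?_⟩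
      simp [map_sub, Bialgebra.counit_algebraMap]
    have h0 : p (x - algebraMap k T (Coalgebra.counit (R := k) x)) = 0 := by
      show Ideal.Quotient.mk I _ = 0
      exact Ideal.Quotient.eq_zero_iff_mem.mpr hd
    rw [map_sub, sub_eq_zero] at h0
    rw [h0, AlgHom.commutes]
  -- p kills sigma
  have hpσ : p.toLinearMap ∘ₗ D.sigmaEps = convOne k := by
    apply TensorProduct.ext'
    intro x y
    have h1 : Coalgebra.counit (R := k) (D.sigmaEps (x ⊗ₜ[k] y))
        = Coalgebra.counit (R := k) (x ⊗ₜ[k] y) := LinearMap.congr_fun hεσ (x ⊗ₜ[k] y)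
    rw [LinearMap.comp_apply, AlgHom.toLinearMap_apply, hpB _ (hσB x y), h1]
    rfl
  -- p ∘ tt = p ∘ tMul
  have hptt : p.toLinearMap ∘ₗ D.tt = p.toLinearMap ∘ₗ D.tMul := by
    have h1 : p.toLinearMap ∘ₗ D.tt
        = conv k (p.toLinearMap ∘ₗ D.sigmaEps) (p.toLinearMap ∘ₗ D.tMul) := by
      rw [← algHom_comp_conv, D.conv_sigmaEps_tMul]
    rw [h1, hpσ, convOne_conv]
  -- comul of 1 ⊗ₜ 1
  have hc11 : (Coalgebra.comul : H ⊗[k] H →ₗ[k] _) ((1 : H) ⊗ₜ[k] (1 : H))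
      = ((1 : H) ⊗ₜ[k] (1 : H)) ⊗ₜ[k] ((1 : H) ⊗ₜ[k] (1 : H)) := by
    have h0 : (Coalgebra.comul : H ⊗[k] H →ₗ[k] _) ((1 : H) ⊗ₜ[k] (1 : H))
        = TensorProduct.tensorTensorTensorComm k H H H H
            ((Coalgebra.comul (1 : H)) ⊗ₜ[k] (Coalgebra.comul (1 : H))) := rfl
    rw [h0, Bialgebra.comul_one, Algebra.TensorProduct.one_def]
    simp
  -- sigma at (1,1) is t 1
  have hσ11 : D.sigmaEps ((1 : H) ⊗ₜ[k] (1 : H)) = D.t 1 := by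
    have h3 : D.t 1 * D.tinv 1 = 1 := by
      have h4 := LinearMap.congr_fun D.conv_t_tinv (1 : H)
      simpa [conv, convOne, Bialgebra.comul_one, Algebra.TensorProduct.one_def,
        Bialgebra.counit_one] using h4
    rw [TakData.sigmaEps, conv]
    simp only [LinearMap.comp_apply, hc11, TensorProduct.map_tmul, LinearMap.mul'_apply]
    have h1 : D.tt ((1 : H) ⊗ₜ[k] (1 : H)) = D.t 1 * D.t 1 := by
      simp [TakData.tt]
    have h2 : D.tinvMul ((1 : H) ⊗ₜ[k] (1 : H)) = D.tinv 1 := by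
      simp [TakData.tinvMul]
    rw [h1, h2, mul_assoc, h3, mul_one]
  -- p (t 1) = 1
  have hpt1 : (p.toLinearMap ∘ₗ D.t) 1 = 1 := by
    have h5 := LinearMap.congr_fun hpσ ((1 : H) ⊗ₜ[k] (1 : H))
    rw [LinearMap.comp_apply, hσ11] at h5
    have h6 : Coalgebra.counit (R := k) ((1 : H) ⊗ₜ[k] (1 : H)) = 1 := by
      rw [_root_.counit_tmul, Bialgebra.counit_one, one_mul]
    rw [LinearMap.comp_apply, h5, convOne_apply, h6, map_one]
  -- multiplicativity of p ∘ t
  have hpmul : ∀ x y : H, (p.toLinearMap ∘ₗ D.t) (x * y)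
      = (p.toLinearMap ∘ₗ D.t) x * (p.toLinearMap ∘ₗ D.t) y := by
    intro x y
    have h7 := LinearMap.congr_fun hptt (x ⊗ₜ[k] y)
    simp only [LinearMap.comp_apply, TakData.tt, TakData.tMul,
      TensorProduct.map_tmul, LinearMap.mul'_apply, AlgHom.toLinearMap_apply] at h7 ⊢
    rw [map_mul] at h7
    exact h7.symm
  -- the algebra map g : H →ₐ Q
  set g : H →ₐ[k] T ⧸ I := AlgHom.ofLinearMap (p.toLinearMap ∘ₗ D.t) hpt1 hpmul with hgdef
  obtain ⟨gbar, hgbar, hguniq⟩ := hab_univ (T ⧸ I) g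
  -- I ⊆ ker F
  have hFB : ∀ x ∈ D.B, F x = algebraMap k Hab (Coalgebra.counit (R := k) x) := by
    intro x hx
    induction hx using Algebra.adjoin_induction with
    | mem z hz =>
      rcases hz with hz | hz
      · obtain ⟨⟨x, y⟩, rfl⟩ := hz
        have h1 := LinearMap.congr_fun hFσ0.1 (x ⊗ₜ[k] y)
        have h2 := LinearMap.congr_fun hεσ (x ⊗ₜ[k] y)
        simp only [LinearMap.comp_apply, AlgHom.toLinearMap_apply] at h1 h2
        rw [h1, h2]
        rfl
      · obtain ⟨⟨x, y⟩, rfl⟩ := hz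
        have h1 := LinearMap.congr_fun hFσ0.2 (x ⊗ₜ[k] y)
        have h2 := LinearMap.congr_fun hεσ' (x ⊗ₜ[k] y)
        simp only [LinearMap.comp_apply, AlgHom.toLinearMap_apply] at h1 h2
        rw [h1, h2]
        rfl
    | algebraMap r => rw [AlgHom.commutes, Bialgebra.counit_algebraMap]
    | add x y hx hy ihx ihy => rw [map_add, ihx, ihy, ← map_add, ← map_add]
    | mul x y hx hy ihx ihy => rw [map_mul, ihx, ihy, ← map_mul, Bialgebra.counit_mul]
  have hIker : ∀ a ∈ I, F a = 0 := by
    intro a ha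
    rw [hIdef] at ha
    refine Submodule.span_induction ?_ ?_ ?_ ?_ ha
    · rintro x ⟨hxB, hxε⟩
      rw [hFB x hxB, hxε, map_zero]
    · exact map_zero F
    · intro x y _ _ hx hy; rw [map_add, hx, hy, add_zero]
    · intro c x _ hx
      rw [smul_eq_mul, map_mul, hx, mul_zero]
  set Fbar : T ⧸ I →ₐ[k] Hab := Ideal.Quotient.liftₐ I F hIker with hFbardef
  have hFbarp : ∀ x : T, Fbar (p x) = F x := by
    intro x
    show Fbar (Ideal.Quotient.mk I x) = F x
    rw [hFbardef, Ideal.Quotient.liftₐ_apply]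
    exact Ideal.Quotient.lift_mk _ _ _
  -- gbar ∘ F = p on generators
  have hgt : gbar.toLinearMap ∘ₗ (F.toLinearMap ∘ₗ D.t) = p.toLinearMap ∘ₗ D.t := by
    rw [hFt, ← AlgHom.comp_toLinearMap, hgbar]
    rfl
  have hφt : (gbar.comp F).toLinearMap ∘ₗ D.t = p.toLinearMap ∘ₗ D.t := by
    rw [AlgHom.comp_toLinearMap, LinearMap.comp_assoc, hgt]
  have hφtinv : (gbar.comp F).toLinearMap ∘ₗ D.tinv = p.toLinearMap ∘ₗ D.tinv := by
    obtain ⟨hp1, hp2⟩ := D.conv_comp_aux p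
    obtain ⟨hq1, hq2⟩ := D.conv_comp_aux (gbar.comp F)
    rw [hφt] at hq2
    exact conv_inv_unique hp1 hq2
  -- key pointwise identity
  have key : ∀ x : T, gbar (F x) = p x := by
    intro x
    have hxT : x ∈ (⊤ : Subalgebra k T) := Algebra.mem_top
    rw [← D.adjoin_eq_top] at hxT
    induction hxT using Algebra.adjoin_induction with
    | mem z hz =>
      rcases hz with ⟨w, rfl⟩ | ⟨w, rfl⟩
      · exact LinearMap.congr_fun hφt w
      · exact LinearMap.congr_fun hφtinv w
    | algebraMap r => rw [AlgHom.commutes, AlgHom.commutes, AlgHom.commutes]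
    | add x y hx hy ihx ihy => rw [map_add, map_add, ihx, ihy, map_add]
    | mul x y hx hy ihx ihy => rw [map_mul, map_mul, ihx, ihy, map_mul]
  -- surjectivity
  refine ⟨?_, ?_, ?_⟩
  · intro y
    obtain ⟨x, hx⟩ := hπsurj y
    refine ⟨D.t x, ?_⟩
    have h8 := LinearMap.congr_fun hFt x
    simp only [LinearMap.comp_apply, AlgHom.toLinearMap_apply] at h8
    rw [h8, hx]
  · apply le_antisymm
    · intro x hx
      rw [RingHom.mem_ker] at hx
      have hx0 : F x = 0 := hx
      have h9 : p x = 0 := by rw [← key x, hx0, map_zero]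
      exact Ideal.Quotient.eq_zero_iff_mem.mp h9
    · intro x hx
      rw [RingHom.mem_ker]
      show F x = 0
      exact hIker x hx
  · have hgF : gbar.comp Fbar = AlgHom.id k (T ⧸ I) := by
      apply AlgHom.ext
      intro q
      obtain ⟨x, rfl⟩ := Ideal.Quotient.mkₐ_surjective k (I := I) q
      show gbar (Fbar (p x)) = p x
      rw [hFbarp, key]
    have hFg : Fbar.comp gbar = AlgHom.id k Hab := by
      obtain ⟨e, he, heuniq⟩ := hab_univ Hab π
      have h1 : (Fbar.comp gbar).comp π = π := by
        apply AlgHom.ext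
        intro x
        show Fbar (gbar (π x)) = π x
        have hgx : gbar (π x) = g x := by
          rw [← hgbar]; rfl
        rw [hgx]
        have hgx2 : g x = p (D.t x) := rfl
        rw [hgx2, hFbarp]
        exact LinearMap.congr_fun hFt x
      have h2 := heuniq _ h1
      have h3 := heuniq (AlgHom.id k Hab) (AlgHom.id_comp π)
      rw [h2, h3]
    exact ⟨AlgEquiv.ofAlgHom Fbar gbar hFg hgF⟩
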